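/- Let L ≥ 1 be an integer, let S_1,…,S_L > 0 and C > 0 be real numbers, and suppose α ∈ ℝ is such that the allocation C_k* = max{ (1/2)·log₂(S_k) − α, 0 } satisfies Σ_{k=1}^{L} C_k* = C. Then for every allocation (C_1,…,C_L) with C_k ≥ 0 for all k and Σ_{k=1}^{L} C_k ≤ C, one has Σ_{k=1}^{L} (1/2)·log₂[(1 + S_k)/(1 + 2^{−2C_k}·S_k)] ≤ Σ_{k=1}^{L} (1/2)·log₂[(1 + S_k)/(1 + 2^{−2C_k*}·S_k)]. That is, the water-filling allocation C* maximizes the sum rate of the per-base-station SIC scheme subject to a total backhaul capacity constraint. (Theorem 5 of the paper.) -/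

import Mathlib

open Real

private lemma tangent_line (Sk cs c : ℝ) (hS : 0 < Sk) :
    (1 / 2) * Real.logb 2 ((1 + Sk) / (1 + (2 : ℝ) ^ (-(2 * c)) * Sk)) ≤
      (1 / 2) * Real.logb 2 ((1 + Sk) / (1 + (2 : ℝ) ^ (-(2 * cs)) * Sk)) +
        ((2 : ℝ) ^ (-(2 * cs)) * Sk / (1 + (2 : ℝ) ^ (-(2 * cs)) * Sk)) * (c - cs) := by
  have h2 : (0 : ℝ) < 2 := two_pos
  set x : ℝ := (2 : ℝ) ^ (-(2 * cs)) * Sk with hxdef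
  have hx : 0 < x := mul_pos (rpow_pos_of_pos h2 _) hS
  set u : ℝ := (2 : ℝ) ^ (2 * cs - 2 * c) with hudef
  have hu : 0 < u := rpow_pos_of_pos h2 _
  have hxu : (2 : ℝ) ^ (-(2 * c)) * Sk = x * u := by
    rw [hxdef, hudef, mul_right_comm, ← Real.rpow_add h2]
    ring_nf
  set θ : ℝ := x / (1 + x) with hθdef
  have h1x : (0 : ℝ) < 1 + x := by linarith
  have hθ0 : 0 ≤ θ := le_of_lt (div_pos hx h1x)
  have hθ1 : 1 - θ = 1 / (1 + x) := by
    rw [hθdef]; field_simp; ring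
  have hamgm : u ^ θ ≤ (1 + x * u) / (1 + x) := by
    have := Real.geom_mean_le_arith_mean2_weighted (w₁ := 1 - θ) (w₂ := θ) (p₁ := 1)
      (p₂ := u) (by rw [hθ1]; positivity) hθ0 zero_le_one hu.le (by ring)
    rw [Real.one_rpow, one_mul] at this
    calc u ^ θ ≤ (1 - θ) * 1 + θ * u := this
      _ = (1 + x * u) / (1 + x) := by
          rw [hθ1, hθdef]; field_simp
  have h1xu : (0 : ℝ) < 1 + x * u := by positivity
  have hupow : (0 : ℝ) < u ^ θ := rpow_pos_of_pos hu _
  have hlogmono : Real.logb 2 (u ^ θ) ≤ Real.logb 2 ((1 + x * u) / (1 + x)) :=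
    Real.logb_le_logb_of_le one_lt_two hupow hamgm
  have hlogupow : Real.logb 2 (u ^ θ) = θ * (2 * cs - 2 * c) := by
    rw [Real.logb_rpow_eq_mul_logb_of_pos hu, hudef, Real.logb_rpow h2 (by norm_num)]
  have hlogdiv : Real.logb 2 ((1 + x * u) / (1 + x)) =
      Real.logb 2 (1 + x * u) - Real.logb 2 (1 + x) :=
    Real.logb_div (ne_of_gt h1xu) (ne_of_gt h1x)
  have h1S : (0 : ℝ) < 1 + Sk := by linarith
  rw [hxu, Real.logb_div (ne_of_gt h1S) (ne_of_gt h1xu),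
    Real.logb_div (ne_of_gt h1S) (ne_of_gt h1x)]
  rw [hlogupow, hlogdiv] at hlogmono
  linarith

/-- Theorem 5 of the paper: the water-filling allocation
`C_k* = max ((1/2) log₂ (S_k) − α) 0`, with `α` chosen so that `∑ k, C_k* = C`,
maximizes the sum rate of the per-base-station SIC scheme with Wyner-Ziv coding subject
to the total backhaul capacity constraint `∑ k, C_k ≤ C`. -/
theorem optimal_backhaul_allocation (L : ℕ) (hL : 1 ≤ L) (S : Fin L → ℝ)
    (hS : ∀ k, 0 < S k) (C : ℝ) (hC : 0 < C) (α : ℝ) (Cstar : Fin L → ℝ)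
    (hCstar : ∀ k, Cstar k = max ((1 / 2) * Real.logb 2 (S k) - α) 0)
    (hCsum : ∑ k, Cstar k = C) :
    ∀ Calloc : Fin L → ℝ, (∀ k, 0 ≤ Calloc k) → (∑ k, Calloc k ≤ C) →
      ∑ k, (1 / 2) * Real.logb 2 ((1 + S k) / (1 + (2 : ℝ) ^ (-(2 * Calloc k)) * S k))
        ≤ ∑ k, (1 / 2) * Real.logb 2 ((1 + S k) / (1 + (2 : ℝ) ^ (-(2 * Cstar k)) * S k)) := by
  intro Ca hCa0 hCaSum
  have h2 : (0 : ℝ) < 2 := two_pos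
  set T : ℝ := (2 : ℝ) ^ (2 * α) with hTdef
  have hT : 0 < T := rpow_pos_of_pos h2 _
  have h1T : (0 : ℝ) < 1 + T := by linarith
  set lam : ℝ := T / (1 + T) with hlamdef
  have hlam0 : 0 ≤ lam := le_of_lt (div_pos hT h1T)
  -- the effective value x*_k and its slope θ_k
  have hCstar_nonneg : ∀ k, 0 ≤ Cstar k := fun k => (hCstar k) ▸ le_max_right _ _
  have hslope : ∀ k, ((2 : ℝ) ^ (-(2 * Cstar k)) * S k / (1 + (2 : ℝ) ^ (-(2 * Cstar k)) * S k))
      * (Ca k - Cstar k) ≤ lam * (Ca k - Cstar k) := by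
    intro k
    set x : ℝ := (2 : ℝ) ^ (-(2 * Cstar k)) * S k with hxdef
    have hx : 0 < x := mul_pos (rpow_pos_of_pos h2 _) (hS k)
    have h1x : (0 : ℝ) < 1 + x := by linarith
    rcases eq_or_lt_of_le (hCstar_nonneg k) with h0 | hpos
    · -- inactive user: Cstar k = 0, x = S k ≤ T, slope ≤ lam, Ca k - Cstar k ≥ 0
      have hxS : x = S k := by
        rw [hxdef, ← h0]; norm_num
      have hmax : (1 / 2) * Real.logb 2 (S k) - α ≤ 0 := by
        by_contra hcon
        push_neg at hcon
        have := hCstar k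
        rw [← h0] at this
        rw [max_eq_left hcon.le] at this
        linarith
      have hST : S k ≤ T := by
        have hlog : Real.logb 2 (S k) ≤ 2 * α := by linarith
        calc S k = (2 : ℝ) ^ (Real.logb 2 (S k)) :=
              (Real.rpow_logb h2 (by norm_num) (hS k)).symm
          _ ≤ T := Real.rpow_le_rpow_left_iff one_lt_two |>.mpr hlog
      have hθlam : x / (1 + x) ≤ lam := by
        rw [hxS, hlamdef, div_le_div_iff₀ (by linarith [hS k]) h1T]
        nlinarith [hS k]
      have hCd : 0 ≤ Ca k - Cstar k := by
        rw [← h0]; simpa using hCa0 k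
      exact mul_le_mul_of_nonneg_right hθlam hCd
    · -- active user: x = T exactly
      have hmax : Cstar k = (1 / 2) * Real.logb 2 (S k) - α := by
        have := hCstar k
        rcases le_or_gt ((1 / 2) * Real.logb 2 (S k) - α) 0 with hle | hgt
        · rw [max_eq_right hle] at this; exact absurd this hpos.ne'
        · rw [max_eq_left hgt.le] at this; exact this
      have hxT : x = T := by
        rw [hxdef, hmax]
        have : -(2 * ((1 / 2) * Real.logb 2 (S k) - α)) = 2 * α + (- Real.logb 2 (S k)) := by
          ring
        rw [this, Real.rpow_add h2, Real.rpow_neg h2.le,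
          Real.rpow_logb h2 (by norm_num) (hS k), ← hTdef]
        field_simp
        exact div_self (hS k).ne'
      rw [hxT, ← hlamdef]
  calc ∑ k, (1 / 2) * Real.logb 2 ((1 + S k) / (1 + (2 : ℝ) ^ (-(2 * Ca k)) * S k))
      ≤ ∑ k, ((1 / 2) * Real.logb 2 ((1 + S k) / (1 + (2 : ℝ) ^ (-(2 * Cstar k)) * S k))
          + ((2 : ℝ) ^ (-(2 * Cstar k)) * S k / (1 + (2 : ℝ) ^ (-(2 * Cstar k)) * S k))
            * (Ca k - Cstar k)) :=
        Finset.sum_le_sum fun k _ => tangent_line (S k) (Cstar k) (Ca k) (hS k)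
    _ ≤ ∑ k, ((1 / 2) * Real.logb 2 ((1 + S k) / (1 + (2 : ℝ) ^ (-(2 * Cstar k)) * S k))
          + lam * (Ca k - Cstar k)) :=
        Finset.sum_le_sum fun k _ => by linarith [hslope k]
    _ = (∑ k, (1 / 2) * Real.logb 2 ((1 + S k) / (1 + (2 : ℝ) ^ (-(2 * Cstar k)) * S k)))
        + lam * ((∑ k, Ca k) - C) := by
        rw [Finset.sum_add_distrib]
        congr 1
        rw [← Finset.mul_sum, Finset.sum_sub_distrib, hCsum]
    _ ≤ ∑ k, (1 / 2) * Real.logb 2 ((1 + S k) / (1 + (2 : ℝ) ^ (-(2 * Cstar k)) * S k)) := by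
        nlinarith [mul_nonneg hlam0 (sub_nonneg.mpr hCaSum)]
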